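/- Let P be a minimal non-abelian finite p-group and let x, y ∈ P generate P with [x,y] = z. Then P' = ⟨z⟩ has order p, z is central in P, and every element of P can be written in the form x^i y^j z^k. -/

import Mathlib

open Subgroup
open scoped commutatorElement

private lemma comm_of_gen_comm {G : Type*} [Group G] (S : Set G)
    (hS : ∀ a ∈ S, ∀ b ∈ S, Commute a b) (htop : Subgroup.closure S = ⊤) :
    ∀ a b : G, Commute a b := by
  have step1 : ∀ a ∈ S, ∀ g : G, Commute a g := by
    intro a ha g
    have hg : g ∈ Subgroup.closure S := htop ▸ Subgroup.mem_top g
    induction hg using Subgroup.closure_induction with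
    | mem b hb => exact hS a ha b hb
    | one => exact Commute.one_right a
    | mul u v hu hv ihu ihv => exact ihu.mul_right ihv
    | inv u hu ihu => exact ihu.inv_right
  intro g b
  have hg : g ∈ Subgroup.closure S := htop ▸ Subgroup.mem_top g
  induction hg using Subgroup.closure_induction with
  | mem a ha => exact step1 a ha b
  | one => exact Commute.one_left b
  | mul u v hu hv ihu ihv => exact ihu.mul_left ihv
  | inv u hu ihu => exact ihu.inv_left

private lemma zpow_eq_npow {G : Type*} [Group G] [Finite G] (g : G) (i : ℤ) :
    ∃ n : ℕ, g ^ i = g ^ n := by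
  refine ⟨(i % (orderOf g : ℤ)).toNat, ?_⟩
  have hpos : 0 < orderOf g := orderOf_pos g
  have h0 : (0 : ℤ) ≤ i % (orderOf g : ℤ) :=
    Int.emod_nonneg i (by exact_mod_cast hpos.ne')
  rw [← zpow_natCast, Int.toNat_of_nonneg h0]
  conv_lhs => rw [← Int.emod_add_mul_ediv i (orderOf g : ℤ)]
  rw [zpow_add, zpow_mul, zpow_natCast, pow_orderOf_eq_one, one_zpow, mul_one]

/-- Every proper subgroup of a finite `p`-group is contained in a proper subgroup
containing all commutators and all `p`-th powers (namely, a maximal subgroup). -/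
private lemma exists_max {p : ℕ} [Fact p.Prime] {P : Type*} [Group P] [Finite P]
    (hP : IsPGroup p P) (H : Subgroup P) (hH : H ≠ ⊤) :
    ∃ M : Subgroup P, H ≤ M ∧ M ≠ ⊤ ∧ (∀ g h : P, ⁅g, h⁆ ∈ M) ∧ ∀ g : P, g ^ p ∈ M := by
  haveI : Finite (Subgroup P) :=
    Finite.of_injective (fun K : Subgroup P => (K : Set P)) SetLike.coe_injective
  obtain ⟨M, hM, hHM⟩ := (eq_top_or_exists_le_coatom H).resolve_left hH
  haveI : Group.IsNilpotent P := hP.isNilpotent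
  haveI hMnormal : M.Normal :=
    NormalizerCondition.normal_of_coatom M normalizerCondition_of_isNilpotent hM
  set f := QuotientGroup.mk' M with hf
  have hfsurj : Function.Surjective f := QuotientGroup.mk'_surjective M
  -- every nontrivial element of the quotient generates it
  have hgen : ∀ q : P ⧸ M, q ≠ 1 → Subgroup.zpowers q = ⊤ := by
    intro q hq
    have hcomap : M ≤ Subgroup.comap f (Subgroup.zpowers q) := by
      intro m hm
      have h1 : f m = 1 := (QuotientGroup.eq_one_iff m).mpr hm
      simp only [Subgroup.mem_comap, h1]
      exact Subgroup.one_mem _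
    rcases hcomap.lt_or_eq with hlt | heq
    · have htop := hM.2 _ hlt
      have h2 := Subgroup.map_comap_eq_self_of_surjective hfsurj (Subgroup.zpowers q)
      rw [htop, Subgroup.map_top_of_surjective f hfsurj] at h2
      exact h2.symm
    · exfalso
      obtain ⟨g, hgq⟩ := hfsurj q
      have hg : g ∈ Subgroup.comap f (Subgroup.zpowers q) := by
        simp only [Subgroup.mem_comap, hgq]
        exact Subgroup.mem_zpowers q
      exact hq (hgq ▸ (QuotientGroup.eq_one_iff g).mpr (heq ▸ hg))
  -- the quotient is nontrivial
  obtain ⟨g0, hg0⟩ : ∃ g0 : P, g0 ∉ M := by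
    by_contra h
    push_neg at h
    exact hM.1 (Subgroup.eq_top_iff' M |>.mpr h)
  have hq0 : (f g0 : P ⧸ M) ≠ 1 := fun h => hg0 ((QuotientGroup.eq_one_iff g0).mp h)
  -- the quotient has order p
  have hQ : IsPGroup p (P ⧸ M) := hP.to_quotient M
  obtain ⟨n, hn⟩ := hQ.exists_card_eq
  have hdvd : p ∣ Nat.card (P ⧸ M) := by
    rcases Nat.eq_zero_or_pos n with rfl | hnpos
    · exfalso
      obtain ⟨hsub, -⟩ := Nat.card_eq_one_iff_exists.mp (by simpa using hn)
      have hsub' : Subsingleton (P ⧸ M) :=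
        (Nat.card_eq_one_iff_unique.mp (by simpa using hn)).1
      exact hq0 (hsub'.elim _ _)
    · rw [hn]; exact dvd_pow_self p hnpos.ne'
  obtain ⟨q1, hq1⟩ := exists_prime_orderOf_dvd_card' p hdvd
  have hq1ne : q1 ≠ 1 := by
    intro h
    rw [h, orderOf_one] at hq1
    exact (Fact.out : p.Prime).one_lt.ne hq1
  have hcardQ : Nat.card (P ⧸ M) = p := by
    rw [← hq1, ← Nat.card_zpowers, hgen q1 hq1ne]
    exact Subgroup.card_top.symm
  -- the quotient is cyclic hence abelian
  have hQcomm : ∀ a b : P ⧸ M, Commute a b := by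
    intro a b
    have ha : a ∈ Subgroup.zpowers q1 := by rw [hgen q1 hq1ne]; trivial
    have hb : b ∈ Subgroup.zpowers q1 := by rw [hgen q1 hq1ne]; trivial
    obtain ⟨i, rfl⟩ := Subgroup.mem_zpowers_iff.mp ha
    obtain ⟨j, rfl⟩ := Subgroup.mem_zpowers_iff.mp hb
    exact (Commute.refl q1).zpow_zpow i j
  refine ⟨M, hHM, hM.1, ?_, ?_⟩
  · intro g h
    apply (QuotientGroup.eq_one_iff _).mp
    rw [show ((QuotientGroup.mk ⁅g, h⁆ : P ⧸ M)) = f ⁅g, h⁆ from rfl, map_commutatorElement]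
    exact commutatorElement_eq_one_iff_commute.mpr (hQcomm _ _)
  · intro g
    apply (QuotientGroup.eq_one_iff _).mp
    rw [show ((QuotientGroup.mk (g ^ p) : P ⧸ M)) = f (g ^ p) from rfl, map_pow, ← hcardQ]
    exact pow_card_eq_one'

theorem stmt15 (p : ℕ) [Fact p.Prime] (P : Type*) [Group P] [Finite P] (hP : IsPGroup p P)
    (hna : ¬ ∀ a b : P, a * b = b * a)
    (hmin : ∀ H : Subgroup P, H ≠ ⊤ → ∀ a ∈ H, ∀ b ∈ H, a * b = b * a)
    (x y : P) (hgen : Subgroup.closure {x, y} = ⊤)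
    (z : P) (hz : z = x * y * x⁻¹ * y⁻¹) :
    commutator P = Subgroup.zpowers z ∧ Nat.card (commutator P) = p ∧
      z ∈ Subgroup.center P ∧
      ∀ g : P, ∃ i j k : ℕ, g = x ^ i * y ^ j * z ^ k := by
  have hzxy : ⁅x, y⁆ = z := by rw [commutatorElement_def, ← hz]
  have hne : ∀ S : Set P, Subgroup.closure S = ⊤ →
      (∀ a ∈ S, ∀ b ∈ S, Commute a b) → False :=
    fun S h hc => hna fun a b => comm_of_gen_comm S hc h a b
  -- cyclic subgroups are proper
  have hx_top : Subgroup.zpowers x ≠ ⊤ := by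
    intro h
    refine hne ({x} : Set P) (by rw [← Subgroup.zpowers_eq_closure]; exact h) ?_
    intro a ha b hb
    rw [Set.mem_singleton_iff] at ha hb
    subst ha; subst hb; exact Commute.refl _
  have hy_top : Subgroup.zpowers y ≠ ⊤ := by
    intro h
    refine hne ({y} : Set P) (by rw [← Subgroup.zpowers_eq_closure]; exact h) ?_
    intro a ha b hb
    rw [Set.mem_singleton_iff] at ha hb
    subst ha; subst hb; exact Commute.refl _
  obtain ⟨M₁, hle₁, hne₁, hcomm₁, hpow₁⟩ := exists_max hP _ hx_top
  obtain ⟨M₂, hle₂, hne₂, hcomm₂, hpow₂⟩ := exists_max hP _ hy_top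
  have hzM₁ : z ∈ M₁ := hzxy ▸ hcomm₁ x y
  have hzM₂ : z ∈ M₂ := hzxy ▸ hcomm₂ x y
  have hxz : Commute x z := hmin M₁ hne₁ x (hle₁ (Subgroup.mem_zpowers x)) z hzM₁
  have hyz : Commute y z := hmin M₂ hne₂ y (hle₂ (Subgroup.mem_zpowers y)) z hzM₂
  -- z is central
  have hzcomm : ∀ g : P, Commute z g := by
    intro g
    have hg : g ∈ Subgroup.closure {x, y} := hgen ▸ Subgroup.mem_top g
    induction hg using Subgroup.closure_induction with
    | mem a ha =>
        rcases Set.mem_insert_iff.mp ha with rfl | ha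
        · exact hxz.symm
        · rw [Set.mem_singleton_iff] at ha; subst ha; exact hyz.symm
    | one => exact Commute.one_right z
    | mul u v hu hv ihu ihv => exact ihu.mul_right ihv
    | inv u hu ihu => exact ihu.inv_right
  have hzcenter : z ∈ Subgroup.center P :=
    Subgroup.mem_center_iff.mpr fun g => (hzcomm g).symm
  -- conjugation formulas
  have hxy1 : x * y * x⁻¹ = z * y := by rw [hz]; group
  have hxy2 : x⁻¹ * y * x = z⁻¹ * y := by
    have h1 : x⁻¹ * (x * y * x⁻¹) * x = y := by group
    rw [hxy1] at h1
    have h2 : x⁻¹ * (z * y) * x = z * (x⁻¹ * y * x) := by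
      calc x⁻¹ * (z * y) * x = x⁻¹ * z * (y * x) := by group
        _ = z * x⁻¹ * (y * x) := by rw [hxz.inv_left.eq]
        _ = z * (x⁻¹ * y * x) := by group
    rw [h2] at h1
    exact eq_inv_mul_of_mul_eq h1
  have hconj : ∀ a : ℤ, x ^ a * y * x ^ (-a) = z ^ a * y := by
    intro a
    induction a using Int.induction_on with
    | zero => simp
    | succ n ih =>
        have e : x ^ ((n : ℤ) + 1) * y * x ^ (-((n : ℤ) + 1)) =
            x * (x ^ (n : ℤ) * y * x ^ (-(n : ℤ))) * x⁻¹ := by group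
        rw [e, ih]
        have h3 : x * (z ^ (n : ℤ) * y) * x⁻¹ = z ^ (n : ℤ) * (x * y * x⁻¹) := by
          calc x * (z ^ (n : ℤ) * y) * x⁻¹ = x * z ^ (n : ℤ) * (y * x⁻¹) := by group
            _ = z ^ (n : ℤ) * x * (y * x⁻¹) := by rw [(hxz.zpow_right (n : ℤ)).eq]
            _ = z ^ (n : ℤ) * (x * y * x⁻¹) := by group
        rw [h3, hxy1, ← mul_assoc, ← zpow_add_one]
    | pred n ih =>
        rw [neg_neg] at ih
        have e : x ^ (-(n : ℤ) - 1) * y * x ^ (-(-(n : ℤ) - 1)) =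
            x⁻¹ * (x ^ (-(n : ℤ)) * y * x ^ (n : ℤ)) * x := by group
        rw [e, ih]
        have h3 : x⁻¹ * (z ^ (-(n : ℤ)) * y) * x = z ^ (-(n : ℤ)) * (x⁻¹ * y * x) := by
          calc x⁻¹ * (z ^ (-(n : ℤ)) * y) * x = x⁻¹ * z ^ (-(n : ℤ)) * (y * x) := by group
            _ = z ^ (-(n : ℤ)) * x⁻¹ * (y * x) := by rw [(hxz.inv_left.zpow_right _).eq]
            _ = z ^ (-(n : ℤ)) * (x⁻¹ * y * x) := by group
        rw [h3, hxy2, ← mul_assoc, ← zpow_sub_one]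
  -- z ≠ 1
  have hz1 : z ≠ 1 := by
    intro h
    apply hne ({x, y} : Set P) hgen
    have hxy : Commute x y := by
      apply commutatorElement_eq_one_iff_commute.mp
      rw [hzxy, h]
    intro a ha b hb
    simp only [Set.mem_insert_iff, Set.mem_singleton_iff] at ha hb
    rcases ha with rfl | rfl <;> rcases hb with rfl | rfl
    · exact Commute.refl _
    · exact hxy
    · exact hxy.symm
    · exact Commute.refl _
  -- z ^ p = 1
  have hxpy : Commute (x ^ p) y :=
    hmin M₂ hne₂ (x ^ p) (hpow₂ x) y (hle₂ (Subgroup.mem_zpowers y))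
  have hzp : z ^ p = 1 := by
    have h1 := hconj (p : ℤ)
    have h2 : x ^ (p : ℤ) * y * x ^ (-(p : ℤ)) = y := by
      rw [zpow_neg, zpow_natCast, hxpy.eq, mul_inv_cancel_right]
    rw [h2] at h1
    have h3 : z ^ (p : ℤ) = 1 := mul_eq_right.mp h1.symm
    rwa [zpow_natCast] at h3
  have hordz : orderOf z = p := orderOf_eq_prime hzp hz1
  -- the subgroup generated by z
  set K := Subgroup.zpowers z with hK
  haveI hKnormal : K.Normal := by
    constructor
    intro n hn g
    obtain ⟨k, rfl⟩ := Subgroup.mem_zpowers_iff.mp hn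
    have : g * z ^ k * g⁻¹ = z ^ k := by
      rw [← ((hzcomm g).zpow_left k).eq, mul_assoc, mul_inv_cancel, mul_one]
    rw [this]
    exact Subgroup.zpow_mem K (Subgroup.mem_zpowers z) k
  set f := QuotientGroup.mk' K with hf
  have hfsurj : Function.Surjective f := QuotientGroup.mk'_surjective K
  have hfz : f z = 1 := (QuotientGroup.eq_one_iff z).mpr (Subgroup.mem_zpowers z)
  have hgenQ : Subgroup.closure ({f x, f y} : Set (P ⧸ K)) = ⊤ := by
    have h1 : Subgroup.closure ({f x, f y} : Set (P ⧸ K)) =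
        Subgroup.map f (Subgroup.closure {x, y}) := by
      rw [MonoidHom.map_closure, Set.image_pair]
    rw [h1, hgen, Subgroup.map_top_of_surjective f hfsurj]
  have hXY : Commute (f x) (f y) := by
    apply commutatorElement_eq_one_iff_commute.mp
    rw [← map_commutatorElement, hzxy]
    exact hfz
  have hQcomm : ∀ a b : P ⧸ K, Commute a b := by
    apply comm_of_gen_comm ({f x, f y} : Set (P ⧸ K)) _ hgenQ
    intro a ha b hb
    simp only [Set.mem_insert_iff, Set.mem_singleton_iff] at ha hb
    rcases ha with rfl | rfl <;> rcases hb with rfl | rfl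
    · exact Commute.refl _
    · exact hXY
    · exact hXY.symm
    · exact Commute.refl _
  -- the commutator subgroup is generated by z
  have hcommK : commutator P = K := by
    apply le_antisymm
    · rw [_root_.commutator_def, Subgroup.commutator_le]
      intro g _ h _
      apply (QuotientGroup.eq_one_iff _).mp
      rw [show ((QuotientGroup.mk ⁅g, h⁆ : P ⧸ K)) = f ⁅g, h⁆ from rfl, map_commutatorElement]
      exact commutatorElement_eq_one_iff_commute.mpr (hQcomm _ _)
    · rw [hK, Subgroup.zpowers_le, _root_.commutator_def]
      exact hzxy ▸ Subgroup.commutator_mem_commutator (Subgroup.mem_top x) (Subgroup.mem_top y)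
  refine ⟨hcommK, ?_, hzcenter, ?_⟩
  · rw [hcommK, hK, Nat.card_zpowers, hordz]
  -- normal form
  intro g
  have hrepQ : ∀ q : P ⧸ K, ∃ i j : ℤ, q = f x ^ i * f y ^ j := by
    intro q
    have hq : q ∈ Subgroup.closure ({f x, f y} : Set (P ⧸ K)) := hgenQ ▸ Subgroup.mem_top q
    induction hq using Subgroup.closure_induction with
    | mem a ha =>
        rcases Set.mem_insert_iff.mp ha with rfl | ha
        · exact ⟨1, 0, by simp⟩
        · rw [Set.mem_singleton_iff] at ha; subst ha; exact ⟨0, 1, by simp⟩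
    | one => exact ⟨0, 0, by simp⟩
    | mul u v hu hv ihu ihv =>
        obtain ⟨i, j, rfl⟩ := ihu
        obtain ⟨a, b, rfl⟩ := ihv
        refine ⟨i + a, j + b, ?_⟩
        rw [zpow_add, zpow_add, (hQcomm (f y ^ j) (f x ^ a)).mul_mul_mul_comm]
    | inv u hu ihu =>
        obtain ⟨i, j, rfl⟩ := ihu
        refine ⟨-i, -j, ?_⟩
        rw [mul_inv_rev, ← zpow_neg, ← zpow_neg, (hQcomm (f y ^ (-j)) (f x ^ (-i))).eq]
  obtain ⟨i, j, hij⟩ := hrepQ (f g)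
  have hfg : f ((x ^ i * y ^ j)⁻¹ * g) = 1 := by
    rw [map_mul, map_inv, map_mul, map_zpow, map_zpow, ← hij, inv_mul_cancel]
  obtain ⟨k, hk⟩ := Subgroup.mem_zpowers_iff.mp ((QuotientGroup.eq_one_iff _).mp hfg)
  have hg : g = x ^ i * y ^ j * z ^ k := by
    rw [hk, mul_inv_cancel_left]
  obtain ⟨ni, hni⟩ := zpow_eq_npow x i
  obtain ⟨nj, hnj⟩ := zpow_eq_npow y j
  obtain ⟨nk, hnk⟩ := zpow_eq_npow z k
  exact ⟨ni, nj, nk, by rw [hg, hni, hnj, hnk]⟩
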